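/- Let n ≥ 2 and let a, c ∈ ℂ with a + c = 1. For 1 ≤ i ≤ n−1, let P_i ∈ M_n(ℂ) be the matrix with (i,i+1)-entry 1, (i+1,i)-entry 1, (k,k)-entry 1 for every k ∉ {i,i+1}, and all other entries 0, and let N_i ∈ M_n(ℂ) be the matrix with (i,i)- and (i+1,i+1)-entries a, (i,i+1)- and (i+1,i)-entries c, (k,k)-entry 1 for every k ∉ {i,i+1}, and all other entries 0. Then the all-ones vector u = (1, 1, …, 1) ∈ ℂⁿ satisfies P_i·u = u and N_i·u = u for all 1 ≤ i ≤ n−1; consequently the one-dimensional span of u is a nonzero proper subspace of ℂⁿ invariant under all the matrices P_i and N_i, so this extension ρ'_S of the standard representation to SB_n at t = 1 is reducible. -/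
import Mathlib


open Matrix

/-- The image of the braid generator under the standard (Tong–Yang–Ma)
representation (0-indexed `i`): `(i,i+1)`-entry `t`, `(i+1,i)`-entry `1`,
diagonal entries `1` outside `{i, i+1}`, all other entries `0`. -/
def stdS (n : ℕ) {R : Type*} [CommRing R] (t : R) (i : ℕ) : Matrix (Fin n) (Fin n) R :=
  Matrix.of fun k l =>
    if (k : ℕ) = i ∧ (l : ℕ) = i + 1 then t
    else if (k : ℕ) = i + 1 ∧ (l : ℕ) = i then 1
    else if k = l ∧ (k : ℕ) ≠ i ∧ (k : ℕ) ≠ i + 1 then 1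
    else 0

/-- The image of the singular generator (0-indexed `i`): `(i,i)`- and
`(i+1,i+1)`-entries `a`, `(i,i+1)`-entry `c*t`, `(i+1,i)`-entry `c`,
diagonal entries `1` outside `{i, i+1}`, all other entries `0`. -/
def stdN (n : ℕ) {R : Type*} [CommRing R] (a c t : R) (i : ℕ) : Matrix (Fin n) (Fin n) R :=
  Matrix.of fun k l =>
    if (k : ℕ) = i ∧ (l : ℕ) = i then a
    else if (k : ℕ) = i + 1 ∧ (l : ℕ) = i + 1 then a
    else if (k : ℕ) = i ∧ (l : ℕ) = i + 1 then c * t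
    else if (k : ℕ) = i + 1 ∧ (l : ℕ) = i then c
    else if k = l then 1
    else 0

lemma sum_ite_fin {n : ℕ} (j : Fin n) (v : ℂ) :
    ∑ l : Fin n, (if (l : ℕ) = (j : ℕ) then v else 0) = v := by
  simp [Fin.val_eq_val]

lemma rowS (n i : ℕ) (hi1 : i + 1 < n) (k : Fin n) :
    ∑ l : Fin n, stdS n (1 : ℂ) i k l = 1 := by
  have hi0 : i < n := by omega
  by_cases hk : (k : ℕ) = i
  · have : ∀ l : Fin n, stdS n (1 : ℂ) i k l
        = (if (l : ℕ) = ((⟨i+1, hi1⟩ : Fin n) : ℕ) then (1:ℂ) else 0) := by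
      intro l
      simp only [stdS, of_apply]
      by_cases hl : (l : ℕ) = i + 1 <;> simp_all [Fin.ext_iff] <;> omega
    rw [Finset.sum_congr rfl fun l _ => this l, sum_ite_fin]
  · by_cases hk' : (k : ℕ) = i + 1
    · have : ∀ l : Fin n, stdS n (1 : ℂ) i k l
          = (if (l : ℕ) = ((⟨i, hi0⟩ : Fin n) : ℕ) then (1:ℂ) else 0) := by
        intro l
        simp only [stdS, of_apply]
        by_cases hl : (l : ℕ) = i <;> simp_all [Fin.ext_iff] <;> omega
      rw [Finset.sum_congr rfl fun l _ => this l, sum_ite_fin]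
    · have : ∀ l : Fin n, stdS n (1 : ℂ) i k l
          = (if (l : ℕ) = (k : ℕ) then (1:ℂ) else 0) := by
        intro l
        simp only [stdS, of_apply]
        by_cases hl : (l : ℕ) = (k : ℕ) <;> simp_all [Fin.ext_iff] <;> omega
      rw [Finset.sum_congr rfl fun l _ => this l, sum_ite_fin]

lemma rowN (n i : ℕ) (hi1 : i + 1 < n) (a c : ℂ) (hac : a + c = 1) (k : Fin n) :
    ∑ l : Fin n, stdN n a c (1 : ℂ) i k l = 1 := by
  have hi0 : i < n := by omega
  by_cases hk : (k : ℕ) = i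
  · have : ∀ l : Fin n, stdN n a c (1 : ℂ) i k l
        = (if (l : ℕ) = ((⟨i, hi0⟩ : Fin n) : ℕ) then a else 0)
          + (if (l : ℕ) = ((⟨i+1, hi1⟩ : Fin n) : ℕ) then c else 0) := by
      intro l
      simp only [stdN, of_apply]
      by_cases hl : (l : ℕ) = i <;> by_cases hl' : (l : ℕ) = i + 1 <;>
        simp_all [Fin.ext_iff] <;> omega
    rw [Finset.sum_congr rfl fun l _ => this l, Finset.sum_add_distrib,
      sum_ite_fin, sum_ite_fin, hac]
  · by_cases hk' : (k : ℕ) = i + 1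
    · have : ∀ l : Fin n, stdN n a c (1 : ℂ) i k l
          = (if (l : ℕ) = ((⟨i, hi0⟩ : Fin n) : ℕ) then c else 0)
            + (if (l : ℕ) = ((⟨i+1, hi1⟩ : Fin n) : ℕ) then a else 0) := by
        intro l
        simp only [stdN, of_apply]
        by_cases hl : (l : ℕ) = i <;> by_cases hl' : (l : ℕ) = i + 1 <;>
          simp_all [Fin.ext_iff] <;> omega
      rw [Finset.sum_congr rfl fun l _ => this l, Finset.sum_add_distrib,
        sum_ite_fin, sum_ite_fin]
      rw [add_comm] at hac; exact hac
    · have : ∀ l : Fin n, stdN n a c (1 : ℂ) i k l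
          = (if (l : ℕ) = (k : ℕ) then (1:ℂ) else 0) := by
        intro l
        simp only [stdN, of_apply]
        by_cases hl : (l : ℕ) = (k : ℕ) <;> simp_all [Fin.ext_iff] <;> omega
      rw [Finset.sum_congr rfl fun l _ => this l, sum_ite_fin]


/-- If `a + c = 1`, the all-ones vector is fixed by all images of the generators of
`SB_n` under the extension of the standard representation at `t = 1`, so its span is
a nonzero proper invariant subspace:  the representation is reducible.
(0-indexed generators `0 ≤ i < n - 1`.) -/
theorem reducible_extension_of_add_eq_one (n : ℕ) (hn : 2 ≤ n)
    (a c : ℂ) (hac : a + c = 1) :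
    (∀ i, i < n - 1 →
      (stdS n (1 : ℂ) i).mulVec (fun _ => 1) = (fun _ => 1) ∧
      (stdN n a c (1 : ℂ) i).mulVec (fun _ => 1) = (fun _ => 1)) ∧
    Submodule.span ℂ {(fun _ => 1 : Fin n → ℂ)} ≠ ⊥ ∧
    Submodule.span ℂ {(fun _ => 1 : Fin n → ℂ)} ≠ ⊤ ∧
    (∀ i, i < n - 1 → ∀ w ∈ Submodule.span ℂ {(fun _ => 1 : Fin n → ℂ)},
      (stdS n (1 : ℂ) i).mulVec w ∈ Submodule.span ℂ {(fun _ => 1 : Fin n → ℂ)} ∧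
      (stdN n a c (1 : ℂ) i).mulVec w ∈ Submodule.span ℂ {(fun _ => 1 : Fin n → ℂ)}) := by
  have hfix : ∀ i, i < n - 1 →
      (stdS n (1 : ℂ) i).mulVec (fun _ => 1) = (fun _ => 1) ∧
      (stdN n a c (1 : ℂ) i).mulVec (fun _ => 1) = (fun _ => 1) := by
    intro i hi
    have hi1 : i + 1 < n := by omega
    constructor <;> funext k <;>
      simp only [mulVec, dotProduct, mul_one]
    · exact rowS n i hi1 k
    · exact rowN n i hi1 a c hac k
  refine ⟨hfix, ?_, ?_, ?_⟩
  · intro h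
    have : (fun _ => 1 : Fin n → ℂ) ∈ Submodule.span ℂ {(fun _ => 1 : Fin n → ℂ)} :=
      Submodule.mem_span_singleton_self _
    rw [h, Submodule.mem_bot] at this
    have := congrFun this ⟨0, by omega⟩
    simp at this
  · intro h
    have hv : (fun j : Fin n => if j = ⟨0, by omega⟩ then (1:ℂ) else 0)
        ∈ Submodule.span ℂ {(fun _ => 1 : Fin n → ℂ)} := by rw [h]; trivial
    rw [Submodule.mem_span_singleton] at hv
    obtain ⟨r, hr⟩ := hv
    have h0 := congrFun hr ⟨0, by omega⟩
    have h1 := congrFun hr ⟨1, by omega⟩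
    simp [Fin.ext_iff] at h0 h1
    rw [h1] at h0
    exact one_ne_zero h0.symm
  · intro i hi w hw
    rw [Submodule.mem_span_singleton] at hw
    obtain ⟨r, rfl⟩ := hw
    obtain ⟨hS, hN⟩ := hfix i hi
    constructor <;> rw [mulVec_smul] <;> rw [Submodule.mem_span_singleton]
    · exact ⟨r, by rw [hS]⟩
    · exact ⟨r, by rw [hN]⟩
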